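/- Let a, b, x ∈ Mₙ(ℂ) where a is the diagonal unitary matrix diag(λ₁, …, λₙ), b = (b_{jk}), x = (x_{jk}). Suppose that for every unit vector ζ ∈ ℂⁿ the matrix Q_{p_ζ} is positive semidefinite, where p_ζ is the vector state p_ζ(M) = ⟪Mζ, ζ⟫. Then for every j ∈ {1, …, n} and all real numbers r₁, …, rₙ and φ₁, …, φₙ: |Σ_{k=1}^{n} r_k · (e^{iφ_k}(x_{jk} − λ_j b_{jk}) + e^{−iφ_k}(x_{kj} − λ_j b_{kj}))|² ≤ (1 − |b_{jj}|²) · Σ_{k=1}^{n} r_k² |λ_j − λ_k|². -/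

import Mathlib

open Matrix
open scoped ComplexOrder

/-- The 3×3 matrix `Q_p` associated with `a, b, x` and a functional `p`;
its rows are `(1, p a, p x)`, `(conj (p a), 1, p b)`,
`(conj (p x), conj (p b), 1)`. -/
def QmatOp {B : Type*} (p : B → ℂ) (a b x : B) : Matrix (Fin 3) (Fin 3) ℂ :=
  !![1, p a, p x;
     (starRingEnd ℂ) (p a), 1, p b;
     (starRingEnd ℂ) (p x), (starRingEnd ℂ) (p b), 1]

lemma qmat_ineq {B : Type*} (p : B → ℂ) (a b x : B)
    (h : (QmatOp p a b x).PosSemidef) :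
    ‖p x - p a * p b‖ ^ 2 ≤
      (1 - ‖p a‖ ^ 2) * (1 - ‖p b‖ ^ 2) := by
  set A := p a with hA
  set Bb := p b with hB
  set C := p x with hC
  have key : ∀ v0 v2 : ℂ,
      0 ≤ (1 - ‖A‖ ^ 2) * ‖v0‖ ^ 2
        + (1 - ‖Bb‖ ^ 2) * ‖v2‖ ^ 2
        + 2 * ((starRingEnd ℂ) v0 * v2 * (C - A * Bb)).re := by
    intro v0 v2
    have h2 := h.dotProduct_mulVec_nonneg ![v0, -((starRingEnd ℂ) A * v0 + Bb * v2), v2]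
    simp [QmatOp, Matrix.mulVec, dotProduct, Fin.sum_univ_three] at h2
    set w : ℂ := (starRingEnd ℂ) v0 * v2 * (C - A * Bb) with hw
    have hE : (starRingEnd ℂ) v0 * (v0 + A * (-(Bb * v2) + -((starRingEnd ℂ) A * v0)) + C * v2) +
        (starRingEnd ℂ) v2 *
          ((starRingEnd ℂ) C * v0 + (starRingEnd ℂ) Bb * (-(Bb * v2) + -((starRingEnd ℂ) A * v0)) + v2)
        = (((1 - ‖A‖ ^ 2) * ‖v0‖ ^ 2
            + (1 - ‖Bb‖ ^ 2) * ‖v2‖ ^ 2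
            + 2 * w.re : ℝ) : ℂ) := by
      have e0 : ((‖v0‖ ^ 2 : ℝ) : ℂ) = v0 * (starRingEnd ℂ) v0 := by
        rw [Complex.sq_norm, Complex.mul_conj]
      have e2 : ((‖v2‖ ^ 2 : ℝ) : ℂ) = v2 * (starRingEnd ℂ) v2 := by
        rw [Complex.sq_norm, Complex.mul_conj]
      have ea : ((‖A‖ ^ 2 : ℝ) : ℂ) = A * (starRingEnd ℂ) A := by
        rw [Complex.sq_norm, Complex.mul_conj]
      have eb : ((‖Bb‖ ^ 2 : ℝ) : ℂ) = Bb * (starRingEnd ℂ) Bb := by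
        rw [Complex.sq_norm, Complex.mul_conj]
      have ew : ((w.re : ℝ) : ℂ) = (w + (starRingEnd ℂ) w) / 2 := by
        rw [Complex.add_conj]; push_cast; ring
      push_cast [e0, e2, ea, eb, ew]
      simp only [hw, map_add, map_neg, _root_.map_mul, map_sub, Complex.conj_conj]
      ring
    rw [← Complex.zero_le_real, ← hE]
    refine le_of_le_of_eq h2 ?_
    simp only [hA, hB, hC]
    ring
  have hα : 0 ≤ 1 - ‖A‖ ^ 2 := by simpa using key 1 0
  have hβ : 0 ≤ 1 - ‖Bb‖ ^ 2 := by simpa using key 0 1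
  set α := 1 - ‖A‖ ^ 2 with hαdef
  set β := 1 - ‖Bb‖ ^ 2 with hβdef
  set K := ‖C - A * Bb‖ with hK
  rcases eq_or_lt_of_le (norm_nonneg (C - A * Bb)) with hK0 | hKpos
  · have hKz : K = 0 := by rw [hK, ← hK0]
    rw [hKz]
    simpa using mul_nonneg hα hβ
  · have hKne : K ≠ 0 := by positivity
    have key2 : ∀ s u : ℝ, 2 * s * u * K ≤ s ^ 2 * α + u ^ 2 * β := by
      intro s u
      have hk := key (s : ℂ) (-(u : ℂ) * (starRingEnd ℂ) (C - A * Bb) / K)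
      have habs2 : ‖-(u : ℂ) * (starRingEnd ℂ) (C - A * Bb) / (K : ℂ)‖ = |u| := by
        rw [norm_div, norm_mul, norm_neg, Complex.norm_real, Real.norm_eq_abs, Complex.norm_conj,
          Complex.norm_real, Real.norm_eq_abs, abs_of_pos hKpos]
        rw [← hK]
        field_simp
      have hz : (starRingEnd ℂ) (C - A * Bb) * (C - A * Bb) = ((K ^ 2 : ℝ) : ℂ) := by
        rw [mul_comm, Complex.mul_conj, ← Complex.sq_norm]
      have hre : (((starRingEnd ℂ) (s : ℂ)) * (-(u : ℂ) * (starRingEnd ℂ) (C - A * Bb) / (K : ℂ)) * (C - A * Bb))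
          = ((-(s * u * K) : ℝ) : ℂ) := by
        rw [Complex.conj_ofReal]
        rw [show ((s:ℂ) * (-(u : ℂ) * (starRingEnd ℂ) (C - A * Bb) / (K : ℂ)) * (C - A * Bb))
            = (s:ℂ) * -(u:ℂ) / (K:ℂ) * ((starRingEnd ℂ) (C - A * Bb) * (C - A * Bb)) by ring, hz]
        have hKc : (K : ℂ) ≠ 0 := by exact_mod_cast hKne
        field_simp
        push_cast
        ring
      rw [habs2, hre] at hk
      simp only [Complex.ofReal_re, Complex.norm_real, Real.norm_eq_abs, sq_abs] at hk
      linarith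
    rcases eq_or_lt_of_le hβ with hβ0 | hβpos
    · exfalso
      have h1 := key2 1 ((α + 1) / (2 * K))
      rw [← hβ0] at h1
      have h2 : (2:ℝ) * 1 * ((α + 1) / (2 * K)) * K = α + 1 := by field_simp
      rw [h2] at h1
      simp at h1
      linarith
    · have h1 := key2 β K
      nlinarith

/- Note: for `ζ : Fin n → ℂ`, the vector state `p_ζ (M) = ⟪Mζ, ζ⟫` (inner
product linear in its first slot) is `star ζ ⬝ᵥ M.mulVec ζ`, and `ζ` being a
unit vector reads `star ζ ⬝ᵥ ζ = 1`. -/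
theorem stmt_12 {n : ℕ} (lam : Fin n → ℂ) (a b x : Matrix (Fin n) (Fin n) ℂ)
    (ha_diag : a = Matrix.diagonal lam)
    (ha_unitary : aᴴ * a = 1 ∧ a * aᴴ = 1)
    (hQ : ∀ ζ : Fin n → ℂ, star ζ ⬝ᵥ ζ = 1 →
      (QmatOp (fun M : Matrix (Fin n) (Fin n) ℂ => star ζ ⬝ᵥ M.mulVec ζ)
        a b x).PosSemidef) :
    ∀ (j : Fin n) (r φ : Fin n → ℝ),
      ‖∑ k, (r k : ℂ) *
          (Complex.exp (Complex.I * (φ k : ℂ)) * (x j k - lam j * b j k) +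
           Complex.exp (-(Complex.I * (φ k : ℂ))) * (x k j - lam j * b k j))‖ ^ 2 ≤
        (1 - ‖b j j‖ ^ 2) *
          ∑ k, (r k) ^ 2 * ‖lam j - lam k‖ ^ 2 := by
  intro j r φ
  -- unitarity of the diagonal entries
  have hu : ∀ k, (starRingEnd ℂ) (lam k) * lam k = 1 := by
    intro k
    have h := ha_unitary.1
    rw [ha_diag, Matrix.diagonal_conjTranspose, Matrix.diagonal_mul_diagonal] at h
    have h2 := congrFun (congrFun h k) k
    simpa [Matrix.diagonal_apply_eq, Matrix.one_apply_eq, Pi.star_apply,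
      RCLike.star_def] using h2
  set η : Fin n → ℂ := fun k => (r k : ℂ) * Complex.exp (Complex.I * (φ k : ℂ)) with hη
  set ev : Fin n → ℂ := Pi.single j 1 with hevdef
  have hse : star ev = ev := by
    funext i
    by_cases h : i = j <;> simp [hevdef, Pi.single_apply, h]
  set w : ℝ → Fin n → ℂ := fun t => ev + (t : ℂ) • η with hwdef
  set P : Matrix (Fin n) (Fin n) ℂ → ℝ → ℂ := fun M t => star (w t) ⬝ᵥ M.mulVec (w t) with hPdef
  set c1 : Matrix (Fin n) (Fin n) ℂ → ℂ :=
    fun M => star ev ⬝ᵥ M.mulVec η + star η ⬝ᵥ M.mulVec ev with hc1def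
  set c2 : Matrix (Fin n) (Fin n) ℂ → ℂ := fun M => star η ⬝ᵥ M.mulVec η with hc2def
  set e1 : ℂ := η j + (starRingEnd ℂ) (η j) with he1def
  set e2 : ℂ := star η ⬝ᵥ η with he2def
  have hstarw : ∀ t : ℝ, star (w t) = star ev + (t : ℂ) • star η := by
    intro t
    rw [hwdef]
    simp only [star_add, star_smul, RCLike.star_def, Complex.conj_ofReal]
  -- quadratic expansion of P
  have hP : ∀ M t, P M t = M j j + t * c1 M + t ^ 2 * c2 M := by
    intro M t
    have h00 : star ev ⬝ᵥ M.mulVec ev = M j j := by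
      rw [hse, hevdef, Matrix.mulVec_single, single_dotProduct]
      simp
    simp only [hPdef, hc1def, hc2def]
    rw [hstarw t, hwdef]
    simp only [Matrix.mulVec_add, Matrix.mulVec_smul, add_dotProduct,
      smul_dotProduct, dotProduct_add, dotProduct_smul,
      smul_eq_mul, h00]
    ring
  -- the norm function
  set m : ℝ → ℝ := fun t => (star (w t) ⬝ᵥ (w t)).re with hmdef
  have hν : ∀ t : ℝ, star (w t) ⬝ᵥ (w t) = 1 + t * e1 + t ^ 2 * e2 := by
    intro t
    have h00 : star ev ⬝ᵥ ev = 1 := by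
      rw [hse, hevdef, single_dotProduct]
      simp
    have h01 : star ev ⬝ᵥ η = η j := by
      rw [hse, hevdef, single_dotProduct]; simp
    have h10 : star η ⬝ᵥ ev = (starRingEnd ℂ) (η j) := by
      rw [hevdef, dotProduct_single]
      simp [RCLike.star_def]
    rw [hstarw t]
    conv_lhs => rw [hwdef]
    simp only [add_dotProduct, smul_dotProduct, dotProduct_add,
      dotProduct_smul, smul_eq_mul, h00, h01, h10, he1def, he2def]
    ring
  have hνreal : ∀ t : ℝ, star (w t) ⬝ᵥ (w t) = ((m t : ℝ) : ℂ) := by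
    intro t
    have h1 : star (w t) ⬝ᵥ (w t) = ((∑ i, Complex.normSq (w t i) : ℝ) : ℂ) := by
      simp only [dotProduct, Pi.star_apply, RCLike.star_def]
      push_cast
      exact Finset.sum_congr rfl fun i _ => by rw [mul_comm, Complex.mul_conj]
    rw [h1]
    simp only [hmdef, h1, Complex.ofReal_re]
  -- conj facts
  have hconjη : ∀ k, (starRingEnd ℂ) (η k) = (r k : ℂ) * Complex.exp (-(Complex.I * (φ k : ℂ))) := by
    intro k
    simp only [hη, _root_.map_mul, Complex.conj_ofReal, ← Complex.exp_conj, map_neg,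
      Complex.conj_I]
    ring_nf
  have he1conj : (starRingEnd ℂ) e1 = e1 := by
    rw [he1def, map_add, Complex.conj_conj, add_comm]
  have he2val : e2 = ((∑ k, (r k) ^ 2 : ℝ) : ℂ) := by
    rw [he2def]
    simp only [dotProduct, Pi.star_apply, RCLike.star_def]
    push_cast
    refine Finset.sum_congr rfl fun k _ => ?_
    rw [mul_comm, Complex.mul_conj]
    norm_cast
    simp [hη, Complex.normSq_mul, ← Complex.sq_norm, Complex.norm_exp]
  have he2conj : (starRingEnd ℂ) e2 = e2 := by rw [he2val, Complex.conj_ofReal]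
  have hc1a : c1 a = lam j * e1 := by
    have h1 : star ev ⬝ᵥ a.mulVec η = lam j * η j := by
      rw [hse, hevdef, single_dotProduct, ha_diag]
      simp [Matrix.mulVec_diagonal]
    have h2 : star η ⬝ᵥ a.mulVec ev = (starRingEnd ℂ) (η j) * lam j := by
      rw [ha_diag, hevdef]
      have : (Matrix.diagonal lam).mulVec (Pi.single j 1) = Pi.single j (lam j) := by
        funext i
        by_cases h : i = j <;> simp [Matrix.mulVec_diagonal, Pi.single_apply, h]
      rw [this, dotProduct_single]
      simp [RCLike.star_def]
    rw [hc1def]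
    simp only [h1, h2, he1def]
    ring
  have hηsq : ∀ k, (starRingEnd ℂ) (η k) * η k = (((r k) ^ 2 : ℝ) : ℂ) := by
    intro k
    rw [mul_comm, Complex.mul_conj]
    norm_cast
    simp [hη, Complex.normSq_mul, ← Complex.sq_norm, Complex.norm_exp]
  have hc2a : c2 a = ∑ k, lam k * (((r k) ^ 2 : ℝ) : ℂ) := by
    rw [hc2def, ha_diag]
    simp only [dotProduct, Pi.star_apply, Matrix.mulVec_diagonal, RCLike.star_def]
    refine Finset.sum_congr rfl fun k _ => ?_
    rw [show (starRingEnd ℂ) (η k) * (lam k * η k) = lam k * ((starRingEnd ℂ) (η k) * η k) by ring,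
      hηsq k]
  have hajj : a j j = lam j := by rw [ha_diag]; simp
  -- the master inequality for every t with positive norm
  have hkey : ∀ t : ℝ, 0 < m t →
      ‖((m t : ℝ) : ℂ) * P x t - P a t * P b t‖ ^ 2 ≤
        ((m t) ^ 2 - ‖P a t‖ ^ 2) * ((m t) ^ 2 - ‖P b t‖ ^ 2) := by
    intro t hmt
    set s := Real.sqrt (m t) with hs
    have hspos : 0 < s := Real.sqrt_pos.mpr hmt
    have hs2 : s ^ 2 = m t := Real.sq_sqrt hmt.le
    set ζ : Fin n → ℂ := ((s⁻¹ : ℝ) : ℂ) • w t with hζ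
    have hstarζ : star ζ = ((s⁻¹ : ℝ) : ℂ) • star (w t) := by
      rw [hζ, star_smul]
      simp [RCLike.star_def, Complex.conj_ofReal]
    have hunit : star ζ ⬝ᵥ ζ = 1 := by
      rw [hζ, hstarζ, smul_dotProduct, dotProduct_smul, hνreal t]
      simp only [smul_eq_mul, ← mul_assoc, ← Complex.ofReal_mul]
      norm_cast
      rw [← hs2]
      field_simp
    have hpM : ∀ M : Matrix (Fin n) (Fin n) ℂ,
        star ζ ⬝ᵥ M.mulVec ζ = (((m t)⁻¹ : ℝ) : ℂ) * P M t := by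
      intro M
      rw [hζ, hstarζ, Matrix.mulVec_smul, smul_dotProduct, dotProduct_smul]
      simp only [smul_eq_mul, hPdef, ← mul_assoc, ← Complex.ofReal_mul]
      congr 2
      rw [← hs2]
      field_simp
    have h0 := qmat_ineq _ a b x (hQ ζ hunit)
    simp only [hpM] at h0
    have hmne : m t ≠ 0 := ne_of_gt hmt
    have hmc : ((m t : ℝ) : ℂ) ≠ 0 := by exact_mod_cast hmne
    have hcomb : (((m t)⁻¹ : ℝ) : ℂ) * P x t
        - ((((m t)⁻¹ : ℝ) : ℂ) * P a t) * ((((m t)⁻¹ : ℝ) : ℂ) * P b t)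
        = ((((m t)⁻¹ : ℝ) : ℂ)) ^ 2 * (((m t : ℝ) : ℂ) * P x t - P a t * P b t) := by
      push_cast
      field_simp
    rw [hcomb] at h0
    rw [norm_mul, norm_pow, Complex.norm_real, Real.norm_eq_abs, abs_of_pos (inv_pos.mpr hmt)] at h0
    rw [norm_mul, Complex.norm_real, Real.norm_eq_abs, abs_of_pos (inv_pos.mpr hmt)] at h0
    rw [norm_mul, Complex.norm_real, Real.norm_eq_abs, abs_of_pos (inv_pos.mpr hmt)] at h0
    set z := ‖((m t : ℝ) : ℂ) * P x t - P a t * P b t‖ with hz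
    set pa := ‖P a t‖
    set pb := ‖P b t‖
    have h1 : z ^ 2 = (m t) ^ 4 * (((m t)⁻¹ ^ 2 * z) ^ 2) := by
      field_simp
    have h2 : ((m t) ^ 2 - pa ^ 2) * ((m t) ^ 2 - pb ^ 2)
        = (m t) ^ 4 * ((1 - ((m t)⁻¹ * pa) ^ 2) * (1 - ((m t)⁻¹ * pb) ^ 2)) := by
      field_simp
    rw [h1, h2]
    exact mul_le_mul_of_nonneg_left h0 (by positivity)
  have hm0 : m 0 = 1 := by
    simp only [hmdef]
    rw [hν 0]
    norm_num
  have hP0 : ∀ M : Matrix (Fin n) (Fin n) ℂ, P M 0 = M j j := by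
    intro M
    rw [hP M 0]
    norm_num
  have habsl : ‖lam j‖ = 1 := by
    have h1 : Complex.normSq (lam j) = 1 := by
      have h := hu j
      rw [mul_comm, Complex.mul_conj] at h
      exact_mod_cast h
    rw [Complex.norm_def, h1, Real.sqrt_one]
  -- t = 0 gives x j j = lam j * b j j
  have hx0 : x j j = lam j * b j j := by
    have hk := hkey 0 (by rw [hm0]; norm_num)
    rw [hm0, hP0 x, hP0 a, hP0 b, hajj, habsl] at hk
    norm_num at hk
    have h1 : ‖x j j - lam j * b j j‖ ^ 2 ≤ 0 := by rw [hk]; simp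
    have h2 : ‖x j j - lam j * b j j‖ ^ 2 = 0 :=
      le_antisymm h1 (by positivity)
    have h3 : x j j - lam j * b j j = 0 := by
      have := pow_eq_zero_iff (n := 2) (by norm_num) |>.mp h2
      exact norm_eq_zero.mp this
    exact sub_eq_zero.mp h3
  -- define the polynomial pieces
  set D : ℂ := c1 x - lam j * c1 b with hDdef
  set F1 : ℝ → ℂ := fun t => D
      + t * (e2 * (x j j) + e1 * c1 x + c2 x - (lam j * c2 b + lam j * e1 * c1 b + c2 a * (b j j)))
      + t ^ 2 * (e2 * c1 x + e1 * c2 x - (lam j * e1 * c2 b + c2 a * c1 b))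
      + t ^ 3 * (e2 * c2 x - c2 a * c2 b) with hF1def
  have hm' : ∀ t : ℝ, ((m t : ℝ) : ℂ) = 1 + t * e1 + t ^ 2 * e2 := by
    intro t
    rw [← hνreal, hν]
  have hF : ∀ t : ℝ, ((m t : ℝ) : ℂ) * P x t - P a t * P b t = t * F1 t := by
    intro t
    simp only [hF1def]
    rw [hm' t, hP x, hP a, hP b, hc1a, hajj, hx0, hDdef]
    ring
  set G2 : ℝ → ℂ := fun t =>
      (2 * e2 - lam j * (starRingEnd ℂ) (c2 a) - (starRingEnd ℂ) (lam j) * c2 a) * (1 + t * e1)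
      + t ^ 2 * (e2 ^ 2 - c2 a * (starRingEnd ℂ) (c2 a)) with hG2def
  have hG : ∀ t : ℝ, ((m t) ^ 2 - ‖P a t‖ ^ 2 : ℝ) = t ^ 2 * (G2 t).re := by
    intro t
    have hPa' : P a t = lam j * (1 + (t : ℂ) * e1) + (t : ℂ) ^ 2 * c2 a := by
      rw [hP a t, hajj, hc1a]
      ring
    have hPac : (starRingEnd ℂ) (P a t)
        = (starRingEnd ℂ) (lam j) * (1 + (t : ℂ) * e1) + (t : ℂ) ^ 2 * (starRingEnd ℂ) (c2 a) := by
      rw [hPa']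
      rw [map_add, _root_.map_mul, _root_.map_mul, map_add, _root_.map_one, _root_.map_mul,
        map_pow, Complex.conj_ofReal, he1conj]
    have hGc : ((m t : ℝ) : ℂ) ^ 2 - P a t * (starRingEnd ℂ) (P a t) = (t : ℂ) ^ 2 * G2 t := by
      rw [hm' t, hPac, hPa', hG2def]
      linear_combination (-(1 + (t : ℂ) * e1) ^ 2) * (hu j)
    have hre : ((m t : ℝ) : ℂ) ^ 2 - P a t * (starRingEnd ℂ) (P a t)
        = ((((m t) ^ 2 - ‖P a t‖ ^ 2 : ℝ)) : ℂ) := by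
      rw [Complex.mul_conj, Complex.sq_norm]
      push_cast
      ring
    have hre2 : ((m t) ^ 2 - ‖P a t‖ ^ 2 : ℝ)
        = (((m t : ℝ) : ℂ) ^ 2 - P a t * (starRingEnd ℂ) (P a t)).re := by
      rw [hre, Complex.ofReal_re]
    rw [hre2, hGc]
    rw [show ((t : ℂ)) ^ 2 = ((t ^ 2 : ℝ) : ℂ) by push_cast; ring, Complex.re_ofReal_mul]
  -- real-valued functions of t
  set Lf : ℝ → ℝ := fun t => ‖F1 t‖ ^ 2 with hLfdef
  set Rf : ℝ → ℝ := fun t => (G2 t).re * ((m t) ^ 2 - ‖P b t‖ ^ 2) with hRfdef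
  have hmcont : Continuous m := by
    have : m = fun t : ℝ => ((1 : ℂ) + (t : ℂ) * e1 + (t : ℂ) ^ 2 * e2).re := by
      funext t
      have := hm' t
      have h2 : m t = (((m t : ℝ) : ℂ)).re := by simp
      rw [h2, this]
    rw [this]
    fun_prop
  have hLR : Lf 0 ≤ Rf 0 := by
    have hF1cont : Continuous F1 := by
      rw [hF1def]
      fun_prop
    have hLcont : Continuous Lf := by
      rw [hLfdef]
      exact (continuous_norm.comp hF1cont).pow 2
    have hRcont : Continuous Rf := by
      have hRf' : Rf = fun t => (G2 t).re *
          ((m t) ^ 2 - ‖b j j + (t : ℂ) * c1 b + (t : ℂ) ^ 2 * c2 b‖ ^ 2) := by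
        funext t
        rw [hRfdef]
        simp only
        rw [hP b t]
      rw [hRf']
      have hG2cont : Continuous fun t : ℝ => (G2 t).re := by
        rw [hG2def]
        fun_prop
      have hbcont : Continuous fun t : ℝ =>
          ‖b j j + (t : ℂ) * c1 b + (t : ℂ) ^ 2 * c2 b‖ :=
        continuous_norm.comp (by fun_prop)
      exact hG2cont.mul (((hmcont.pow 2)).sub (hbcont.pow 2))
    have hevt : ∀ᶠ t in nhdsWithin (0 : ℝ) {(0 : ℝ)}ᶜ, Lf t ≤ Rf t := by
      have hpos : ∀ᶠ t in nhdsWithin (0 : ℝ) {(0 : ℝ)}ᶜ, 0 < m t := by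
        have h1 : ∀ᶠ t in nhds (0 : ℝ), 0 < m t :=
          (hmcont.tendsto 0).eventually (eventually_gt_nhds (by rw [hm0]; norm_num))
        exact h1.filter_mono nhdsWithin_le_nhds
      filter_upwards [hpos, self_mem_nhdsWithin] with t hmt ht0
      have ht0' : (t : ℝ) ≠ 0 := ht0
      have hk := hkey t hmt
      rw [hF t] at hk
      have habs : ‖(t : ℂ) * F1 t‖ ^ 2 = t ^ 2 * Lf t := by
        rw [norm_mul, Complex.norm_real, Real.norm_eq_abs, mul_pow, sq_abs]
      rw [habs, hG t] at hk
      have ht2 : (0 : ℝ) < t ^ 2 := by positivity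
      have hk2 : t ^ 2 * Lf t ≤ t ^ 2 * Rf t := by
        calc t ^ 2 * Lf t ≤ (t ^ 2 * (G2 t).re) * ((m t) ^ 2 - ‖P b t‖ ^ 2) := hk
          _ = t ^ 2 * Rf t := by rw [hRfdef]; ring
      exact le_of_mul_le_mul_left hk2 ht2
    have h1 : Filter.Tendsto Lf (nhdsWithin (0 : ℝ) {(0 : ℝ)}ᶜ) (nhds (Lf 0)) :=
      (hLcont.tendsto 0).mono_left nhdsWithin_le_nhds
    have h2 : Filter.Tendsto Rf (nhdsWithin (0 : ℝ) {(0 : ℝ)}ᶜ) (nhds (Rf 0)) :=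
      (hRcont.tendsto 0).mono_left nhdsWithin_le_nhds
    exact le_of_tendsto_of_tendsto h1 h2 hevt
  -- identify the endpoints
  have hc1sum : ∀ M : Matrix (Fin n) (Fin n) ℂ,
      c1 M = ∑ k, (M j k * η k + (starRingEnd ℂ) (η k) * M k j) := by
    intro M
    have h1 : star ev ⬝ᵥ M.mulVec η = ∑ k, M j k * η k := by
      rw [hse, hevdef, single_dotProduct]
      simp [Matrix.mulVec, dotProduct]
    have h2 : star η ⬝ᵥ M.mulVec ev = ∑ k, (starRingEnd ℂ) (η k) * M k j := by
      rw [hevdef, Matrix.mulVec_single]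
      simp [dotProduct, RCLike.star_def]
    rw [hc1def]
    simp only [h1, h2, ← Finset.sum_add_distrib]
  have hD : D = ∑ k, (r k : ℂ) *
      (Complex.exp (Complex.I * (φ k : ℂ)) * (x j k - lam j * b j k) +
       Complex.exp (-(Complex.I * (φ k : ℂ))) * (x k j - lam j * b k j)) := by
    rw [hDdef, hc1sum x, hc1sum b, Finset.mul_sum, ← Finset.sum_sub_distrib]
    refine Finset.sum_congr rfl fun k _ => ?_
    rw [hconjη k]
    simp only [hη]
    ring
  have hG20 : (G2 0).re = ∑ k, (r k) ^ 2 * ‖lam j - lam k‖ ^ 2 := by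
    have hc2aconj : (starRingEnd ℂ) (c2 a) = ∑ k, (starRingEnd ℂ) (lam k) * (((r k) ^ 2 : ℝ) : ℂ) := by
      rw [hc2a, map_sum]
      refine Finset.sum_congr rfl fun k _ => ?_
      rw [_root_.map_mul, Complex.conj_ofReal]
    have h0 : G2 0 = ((∑ k, (r k) ^ 2 * ‖lam j - lam k‖ ^ 2 : ℝ) : ℂ) := by
      have hsimp : G2 0 = 2 * e2 - lam j * (starRingEnd ℂ) (c2 a)
          - (starRingEnd ℂ) (lam j) * c2 a := by
        rw [hG2def]
        push_cast
        ring
      rw [hsimp, he2val, hc2aconj, hc2a, Finset.mul_sum, Finset.mul_sum]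
      push_cast
      rw [show ((2 : ℂ) * ∑ k, ((r k : ℂ)) ^ 2) = ∑ k, 2 * ((r k : ℂ)) ^ 2 by rw [Finset.mul_sum]]
      rw [← Finset.sum_sub_distrib, ← Finset.sum_sub_distrib]
      refine Finset.sum_congr rfl fun k _ => ?_
      have habs2 : (((‖lam j - lam k‖ : ℝ) : ℂ)) ^ 2
          = (lam j - lam k) * ((starRingEnd ℂ) (lam j) - (starRingEnd ℂ) (lam k)) := by
        have h1 : (((‖lam j - lam k‖ : ℝ) : ℂ)) ^ 2
            = ((‖lam j - lam k‖ ^ 2 : ℝ) : ℂ) := by push_cast; ring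
        rw [h1, Complex.sq_norm, ← Complex.mul_conj, map_sub]
      push_cast
      rw [habs2]
      linear_combination (-((r k : ℂ)) ^ 2) * (hu j) - ((r k : ℂ)) ^ 2 * (hu k)
    rw [h0, Complex.ofReal_re]
  have hL0 : Lf 0 = ‖∑ k, (r k : ℂ) *
      (Complex.exp (Complex.I * (φ k : ℂ)) * (x j k - lam j * b j k) +
       Complex.exp (-(Complex.I * (φ k : ℂ))) * (x k j - lam j * b k j))‖ ^ 2 := by
    simp only [hLfdef, hF1def]
    norm_num
    rw [← hD]
  have hR0 : Rf 0 = (1 - ‖b j j‖ ^ 2) *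
      ∑ k, (r k) ^ 2 * ‖lam j - lam k‖ ^ 2 := by
    simp only [hRfdef]
    rw [hG20, hm0, hP0 b]
    ring
  rw [← hL0, ← hR0]
  exact hLR
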